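/- Let ε > 0, V a finite nonempty set with the uniform measure, and f : V × V → [0,∞) a symmetric function. Then there exists a partition 𝒫 of V into at most 2^{32·E[f]/ε²} parts such that ‖(f − f_𝒫)·1_{f_𝒫 ≤ 1}‖_□ ≤ ε. -/

import Mathlib

open Finset

/-- The stepping `f_𝒫` of `f : V × V → ℝ` with respect to a partition `𝒫` of `V`: on each
block `A × B` it is the average of `f` over `A × B`. -/
noncomputable def stepFn {V : Type*} [DecidableEq V] [Fintype V]
    (P : Finpartition (Finset.univ : Finset V)) (f : V → V → ℝ) (x y : V) : ℝ :=
  (∑ a ∈ P.part x, ∑ b ∈ P.part y, f a b) / (((P.part x).card : ℝ) * ((P.part y).card : ℝ))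

/-- The cut norm of `g : V × V → ℝ`: the supremum over subsets `A, B ⊆ V` of
`|E[g(x,y)1_A(x)1_B(y)]|`, with uniform independent `x, y ∈ V`. -/
noncomputable def cutNorm {V : Type*} [Fintype V] (g : V → V → ℝ) : ℝ :=
  ⨆ p : Finset V × Finset V,
    |(∑ x ∈ p.1, ∑ y ∈ p.2, g x y) / ((Fintype.card V : ℝ)) ^ 2|

namespace SWR

noncomputable def phi (t : ℝ) : ℝ := if t ≤ 3 then t ^ 2 else 6 * t - 9

noncomputable def phi' (t : ℝ) : ℝ := if t ≤ 3 then 2 * t else 6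

lemma phi_nonneg {t : ℝ} (ht : 0 ≤ t) : 0 ≤ phi t := by
  unfold phi; split_ifs with h
  · positivity
  · linarith

lemma phi_le {t : ℝ} (ht : 0 ≤ t) : phi t ≤ 6 * t := by
  unfold phi; split_ifs with h
  · nlinarith
  · linarith

lemma bregman_nonneg {s t : ℝ} (hs : 0 ≤ s) (ht : 0 ≤ t) :
    0 ≤ phi s - phi t - phi' t * (s - t) := by
  unfold phi phi'; split_ifs with h1 h2 h2 <;>
    nlinarith [sq_nonneg (s - t), sq_nonneg (s - 3), sq_nonneg (3 - t)]

lemma bregman_eq {s t : ℝ} (hs : s ≤ 3) (ht1 : t ≤ 1) :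
    phi s - phi t - phi' t * (s - t) = (s - t) ^ 2 := by
  unfold phi phi'
  rw [if_pos hs, if_pos (by linarith : t ≤ 3), if_pos (by linarith : t ≤ 3)]
  ring

lemma bregman_large {s t : ℝ} (hs : 3 < s) (ht0 : 0 ≤ t) (ht1 : t ≤ 1) :
    2 * (s - t) ≤ phi s - phi t - phi' t * (s - t) := by
  unfold phi phi'
  rw [if_neg (by linarith), if_pos (by linarith : t ≤ 3), if_pos (by linarith : t ≤ 3)]
  nlinarith [mul_nonneg (by linarith : (0:ℝ) ≤ 1 - t) (by linarith : (0:ℝ) ≤ s - 3),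
    sq_nonneg (1 - t)]

variable {V : Type*} [DecidableEq V] [Fintype V] [Nonempty V]

lemma mem_own_part (P : Finpartition (univ : Finset V)) (x : V) : x ∈ P.part x :=
  P.mem_part (mem_univ x)

lemma part_card_pos (P : Finpartition (univ : Finset V)) (x : V) :
    (0:ℝ) < ((P.part x).card : ℝ) := by
  have : (P.part x).Nonempty := ⟨x, mem_own_part P x⟩
  exact_mod_cast Finset.card_pos.2 this

lemma part_eq_part {P : Finpartition (univ : Finset V)} {x y : V} (h : y ∈ P.part x) :
    P.part y = P.part x :=
  P.part_eq_of_mem (P.part_mem.2 (mem_univ x)) h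

lemma stepFn_nonneg (P : Finpartition (univ : Finset V)) {f : V → V → ℝ}
    (hnn : ∀ x y, 0 ≤ f x y) (x y : V) : 0 ≤ stepFn P f x y := by
  unfold stepFn
  apply div_nonneg
  · exact Finset.sum_nonneg fun a _ => Finset.sum_nonneg fun b _ => hnn a b
  · positivity

lemma sum_parts (P : Finpartition (univ : Finset V)) (F : V → ℝ) :
    ∑ x, F x = ∑ p ∈ P.parts, ∑ x ∈ p, F x := by
  conv_lhs => rw [← P.biUnion_parts]
  exact Finset.sum_biUnion (P.supIndep.pairwiseDisjoint)

lemma sum_blocks (P : Finpartition (univ : Finset V)) (T : V → V → ℝ) :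
    ∑ x, ∑ y, T x y = ∑ p ∈ P.parts, ∑ q ∈ P.parts, ∑ x ∈ p, ∑ y ∈ q, T x y := by
  rw [sum_parts P (fun x => ∑ y, T x y)]
  refine Finset.sum_congr rfl fun p _ => ?_
  calc ∑ x ∈ p, ∑ y, T x y = ∑ x ∈ p, ∑ q ∈ P.parts, ∑ y ∈ q, T x y :=
        Finset.sum_congr rfl fun x _ => sum_parts P _
    _ = ∑ q ∈ P.parts, ∑ x ∈ p, ∑ y ∈ q, T x y := Finset.sum_comm

lemma sum_mul_step (P : Finpartition (univ : Finset V)) (f h : V → V → ℝ)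
    (hm : ∀ x x' y y', P.part x = P.part x' → P.part y = P.part y' → h x y = h x' y') :
    ∑ x, ∑ y, f x y * h x y = ∑ x, ∑ y, stepFn P f x y * h x y := by
  rw [sum_blocks P (fun x y => f x y * h x y), sum_blocks P (fun x y => stepFn P f x y * h x y)]
  refine Finset.sum_congr rfl fun p hp => Finset.sum_congr rfl fun q hq => ?_
  obtain ⟨x₀, hx₀⟩ := P.nonempty_of_mem_parts hp
  obtain ⟨y₀, hy₀⟩ := P.nonempty_of_mem_parts hq
  have hpp : ∀ x ∈ p, P.part x = p := fun x hx => P.part_eq_of_mem hp hx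
  have hqq : ∀ y ∈ q, P.part y = q := fun y hy => P.part_eq_of_mem hq hy
  have hcongr : ∀ x ∈ p, ∀ y ∈ q, h x y = h x₀ y₀ := fun x hx y hy =>
    hm x x₀ y y₀ (by rw [hpp x hx, hpp x₀ hx₀]) (by rw [hqq y hy, hqq y₀ hy₀])
  have hstep : ∀ x ∈ p, ∀ y ∈ q, stepFn P f x y
      = (∑ a ∈ p, ∑ b ∈ q, f a b) / ((p.card : ℝ) * (q.card : ℝ)) := fun x hx y hy => by
    unfold stepFn; rw [hpp x hx, hqq y hy]
  have hpc : (0:ℝ) < (p.card : ℝ) := by exact_mod_cast Finset.card_pos.2 ⟨x₀, hx₀⟩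
  have hqc : (0:ℝ) < (q.card : ℝ) := by exact_mod_cast Finset.card_pos.2 ⟨y₀, hy₀⟩
  calc ∑ x ∈ p, ∑ y ∈ q, f x y * h x y
      = ∑ x ∈ p, ∑ y ∈ q, f x y * h x₀ y₀ :=
        Finset.sum_congr rfl fun x hx => Finset.sum_congr rfl fun y hy => by
          rw [hcongr x hx y hy]
    _ = (∑ x ∈ p, ∑ y ∈ q, f x y) * h x₀ y₀ := by
        rw [Finset.sum_mul]; exact Finset.sum_congr rfl fun x hx => (Finset.sum_mul _ _ _).symm
    _ = ∑ x ∈ p, ∑ y ∈ q, stepFn P f x y * h x y := by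
        have h2 : ∑ x ∈ p, ∑ y ∈ q, stepFn P f x y * h x y
            = ∑ _x ∈ p, ∑ _y ∈ q,
              ((∑ a ∈ p, ∑ b ∈ q, f a b) / ((p.card : ℝ) * (q.card : ℝ)) * h x₀ y₀) :=
          Finset.sum_congr rfl fun x hx => Finset.sum_congr rfl fun y hy => by
            rw [hstep x hx y hy, hcongr x hx y hy]
        rw [h2, Finset.sum_const, Finset.sum_const, nsmul_eq_mul, nsmul_eq_mul]
        field_simp

lemma step_sum_eq (P : Finpartition (univ : Finset V)) (f : V → V → ℝ) :
    ∑ x, ∑ y, stepFn P f x y = ∑ x, ∑ y, f x y := by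
  have := sum_mul_step P f (fun _ _ => 1) (fun _ _ _ _ _ _ => rfl)
  simpa using this.symm



def refineSetoid (P : Finpartition (univ : Finset V)) (A B : Finset V) : Setoid V where
  r x y := P.part x = P.part y ∧ (x ∈ A ↔ y ∈ A) ∧ (x ∈ B ↔ y ∈ B)
  iseqv := ⟨fun _ => ⟨rfl, Iff.rfl, Iff.rfl⟩,
    fun h => ⟨h.1.symm, h.2.1.symm, h.2.2.symm⟩,
    fun h h' => ⟨h.1.trans h'.1, h.2.1.trans h'.2.1, h.2.2.trans h'.2.2⟩⟩

instance refineSetoidDec (P : Finpartition (univ : Finset V)) (A B : Finset V) :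
    DecidableRel (refineSetoid P A B).r := fun x y =>
  decidable_of_iff (P.part x = P.part y ∧ (x ∈ A ↔ y ∈ A) ∧ (x ∈ B ↔ y ∈ B)) Iff.rfl

def refine (P : Finpartition (univ : Finset V)) (A B : Finset V) :
    Finpartition (univ : Finset V) :=
  Finpartition.ofSetoid (refineSetoid P A B)

lemma mem_refine_part {P : Finpartition (univ : Finset V)} {A B : Finset V} {x y : V} :
    y ∈ (refine P A B).part x ↔
      (P.part x = P.part y ∧ (x ∈ A ↔ y ∈ A) ∧ (x ∈ B ↔ y ∈ B)) :=
  Finpartition.mem_part_ofSetoid_iff_rel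

lemma refine_subset (P : Finpartition (univ : Finset V)) (A B : Finset V) (x : V) :
    (refine P A B).part x ⊆ P.part x := fun y hy => by
  obtain ⟨h1, -, -⟩ := mem_refine_part.1 hy
  rw [h1]
  exact P.mem_part (mem_univ y)

lemma refine_part_congr {P : Finpartition (univ : Finset V)} {A B : Finset V} {x x' : V}
    (h : (refine P A B).part x = (refine P A B).part x') :
    P.part x = P.part x' ∧ (x ∈ A ↔ x' ∈ A) ∧ (x ∈ B ↔ x' ∈ B) := by
  have hx' : x' ∈ (refine P A B).part x := by
    rw [h]; exact (refine P A B).mem_part (mem_univ x')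
  exact mem_refine_part.1 hx'

lemma card_refine_le (P : Finpartition (univ : Finset V)) (A B : Finset V) :
    (refine P A B).parts.card ≤ 4 * P.parts.card := by
  classical
  set Q := refine P A B with hQ
  set τ : V → Finset V × Bool × Bool := fun x => (P.part x, decide (x ∈ A), decide (x ∈ B))
    with hτ
  set σ : Finset V × Bool × Bool → Finset V := fun pc =>
    univ.filter fun y => pc.1 = P.part y ∧ decide (y ∈ A) = pc.2.1 ∧ decide (y ∈ B) = pc.2.2
    with hσ
  have hpart : ∀ x : V, Q.part x = σ (τ x) := by
    intro x
    ext y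
    simp only [hσ, hτ, mem_filter, mem_univ, true_and, decide_eq_decide]
    rw [mem_refine_part]
    tauto
  have hsub1 : Q.parts ⊆ (univ : Finset V).image (fun x => Q.part x) := by
    intro t ht
    obtain ⟨x, hx⟩ := Q.nonempty_of_mem_parts ht
    exact mem_image.2 ⟨x, mem_univ x, (Q.part_eq_of_mem ht hx)⟩
  have h1 : Q.parts.card ≤ ((univ : Finset V).image (fun x => Q.part x)).card :=
    Finset.card_le_card hsub1
  have h2 : (univ : Finset V).image (fun x => Q.part x)
      = ((univ : Finset V).image τ).image σ := by
    rw [Finset.image_image]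
    exact Finset.image_congr fun x _ => hpart x
  have h3 : ((univ : Finset V).image τ) ⊆ P.parts ×ˢ (univ : Finset (Bool × Bool)) := by
    intro z hz
    obtain ⟨x, -, rfl⟩ := mem_image.1 hz
    exact Finset.mem_product.2 ⟨P.part_mem.2 (mem_univ x), mem_univ _⟩
  calc Q.parts.card ≤ ((univ : Finset V).image (fun x => Q.part x)).card := h1
    _ = (((univ : Finset V).image τ).image σ).card := by rw [h2]
    _ ≤ ((univ : Finset V).image τ).card := Finset.card_image_le
    _ ≤ (P.parts ×ˢ (univ : Finset (Bool × Bool))).card := Finset.card_le_card h3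
    _ = 4 * P.parts.card := by
        rw [Finset.card_product]
        simp [mul_comm]


lemma sum_ind (u : V → ℝ) (C : Finset V) :
    ∑ x ∈ C, u x = ∑ x, u x * (if x ∈ C then 1 else 0) := by
  rw [← Finset.sum_subset (Finset.subset_univ C)
    (fun x _ hx => by rw [if_neg hx, mul_zero])]
  exact Finset.sum_congr rfl fun x hx => by rw [if_pos hx, mul_one]

lemma sum_restrict (A B : Finset V) (T : V → V → ℝ) :
    ∑ x ∈ A, ∑ y ∈ B, T x y
      = ∑ x, ∑ y, T x y * ((if x ∈ A then 1 else 0) * (if y ∈ B then 1 else 0)) := by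
  calc ∑ x ∈ A, ∑ y ∈ B, T x y
      = ∑ x ∈ A, ∑ y, T x y * (if y ∈ B then 1 else 0) :=
        Finset.sum_congr rfl fun x _ => sum_ind _ B
    _ = ∑ x, (∑ y, T x y * (if y ∈ B then 1 else 0)) * (if x ∈ A then 1 else 0) :=
        sum_ind _ A
    _ = ∑ x, ∑ y, T x y * ((if x ∈ A then 1 else 0) * (if y ∈ B then 1 else 0)) := by
        refine Finset.sum_congr rfl fun x _ => ?_
        rw [Finset.sum_mul]
        exact Finset.sum_congr rfl fun y _ => by ring


noncomputable def hfun (P : Finpartition (univ : Finset V)) (f : V → V → ℝ)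
    (A B : Finset V) (x y : V) : ℝ :=
  (if stepFn P f x y ≤ 1 then 1 else 0) *
    ((if x ∈ A then 1 else 0) * (if y ∈ B then 1 else 0))

noncomputable def chi (P : Finpartition (univ : Finset V)) (f : V → V → ℝ)
    (A B : Finset V) (x y : V) : ℝ :=
  (if stepFn (refine P A B) f x y ≤ 3 then 1 else 0) * hfun P f A B x y

noncomputable def psi (P Q : Finpartition (univ : Finset V)) (f : V → V → ℝ) (x y : V) : ℝ :=
  phi (stepFn Q f x y) - phi (stepFn P f x y)
    - phi' (stepFn P f x y) * (stepFn Q f x y - stepFn P f x y)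

lemma stepFn_meas (P : Finpartition (univ : Finset V)) (f : V → V → ℝ) :
    ∀ x x' y y' : V, P.part x = P.part x' → P.part y = P.part y' →
      stepFn P f x y = stepFn P f x' y' := by
  intro x x' y y' hx hy
  unfold stepFn
  rw [hx, hy]

lemma stepFn_refine_meas (P : Finpartition (univ : Finset V)) (f : V → V → ℝ) (A B : Finset V) :
    ∀ x x' y y' : V,
      (refine P A B).part x = (refine P A B).part x' →
      (refine P A B).part y = (refine P A B).part y' →
      stepFn P f x y = stepFn P f x' y' := by
  intro x x' y y' hx hy
  exact stepFn_meas P f x x' y y' (refine_part_congr hx).1 (refine_part_congr hy).1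

lemma hfun_meas (P : Finpartition (univ : Finset V)) (f : V → V → ℝ) (A B : Finset V) :
    ∀ x x' y y' : V,
      (refine P A B).part x = (refine P A B).part x' →
      (refine P A B).part y = (refine P A B).part y' →
      hfun P f A B x y = hfun P f A B x' y' := by
  intro x x' y y' hx hy
  obtain ⟨hPx, hAx, hBx⟩ := refine_part_congr hx
  obtain ⟨hPy, hAy, hBy⟩ := refine_part_congr hy
  have hg : stepFn P f x y = stepFn P f x' y' := stepFn_meas P f x x' y y' hPx hPy
  unfold hfun
  rw [hg, if_congr hAx rfl rfl, if_congr hBy rfl rfl]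

lemma hfun_cases (P : Finpartition (univ : Finset V)) (f : V → V → ℝ) (A B : Finset V)
    (x y : V) :
    (hfun P f A B x y = 1 ∧ stepFn P f x y ≤ 1) ∨ hfun P f A B x y = 0 := by
  unfold hfun
  split_ifs with h1 h2 h3 <;> simp_all

lemma chi_cases (P : Finpartition (univ : Finset V)) (f : V → V → ℝ) (A B : Finset V)
    (x y : V) :
    (chi P f A B x y = 1 ∧ stepFn P f x y ≤ 1 ∧ stepFn (refine P A B) f x y ≤ 3) ∨
      chi P f A B x y = 0 := by
  unfold chi
  rcases hfun_cases P f A B x y with ⟨h1, h2⟩ | h1 <;> rw [h1] <;> split_ifs with hc <;>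
    simp_all

lemma increment (f : V → V → ℝ) (hnn : ∀ x y, 0 ≤ f x y) {ε : ℝ} (hε0 : 0 < ε) (hε1 : ε ≤ 1)
    (P : Finpartition (univ : Finset V)) (A B : Finset V)
    (hdev : ε * ((Fintype.card V : ℝ)) ^ 2 <
      |∑ x ∈ A, ∑ y ∈ B,
        (f x y - stepFn P f x y) * (if stepFn P f x y ≤ 1 then 1 else 0)|) :
    ∑ x, ∑ y, phi (stepFn P f x y) + ε ^ 2 * ((Fintype.card V : ℝ)) ^ 2 / 2 ≤
      ∑ x, ∑ y, phi (stepFn (refine P A B) f x y) := by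
  have hN : (0:ℝ) < (Fintype.card V : ℝ) := by
    exact_mod_cast Fintype.card_pos
  have hN2 : (0:ℝ) < ((Fintype.card V : ℝ)) ^ 2 := by positivity
  set Q := refine P A B with hQdef
  -- nonnegativity of step functions
  have hgnn : ∀ x y, 0 ≤ stepFn P f x y := stepFn_nonneg P hnn
  have hg'nn : ∀ x y, 0 ≤ stepFn Q f x y := stepFn_nonneg Q hnn
  -- rewrite the deviation as a full sum against hfun
  have hdev1 : ε * ((Fintype.card V : ℝ)) ^ 2 <
      |∑ x, ∑ y, (f x y - stepFn P f x y) * hfun P f A B x y| := by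
    have e0 := sum_restrict A B
      (fun x y => (f x y - stepFn P f x y) * (if stepFn P f x y ≤ 1 then 1 else 0))
    rw [e0] at hdev
    have e1 : ∑ x, ∑ y, ((f x y - stepFn P f x y) * (if stepFn P f x y ≤ 1 then 1 else 0)) *
          ((if x ∈ A then 1 else 0) * (if y ∈ B then 1 else 0))
        = ∑ x, ∑ y, (f x y - stepFn P f x y) * hfun P f A B x y := by
      refine Finset.sum_congr rfl fun x _ => Finset.sum_congr rfl fun y _ => ?_
      unfold hfun
      ring
    rw [e1] at hdev
    exact hdev
  -- adjointness : replace f by stepFn Q f against hfun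
  have e1 := sum_mul_step Q f (hfun P f A B) (hfun_meas P f A B)
  have hDeq : ∑ x, ∑ y, (stepFn Q f x y - stepFn P f x y) * hfun P f A B x y
      = ∑ x, ∑ y, (f x y - stepFn P f x y) * hfun P f A B x y := by
    simp only [sub_mul, Finset.sum_sub_distrib]
    rw [← e1]
  have hdev2 : ε * ((Fintype.card V : ℝ)) ^ 2 <
      |∑ x, ∑ y, (stepFn Q f x y - stepFn P f x y) * hfun P f A B x y| := by
    rw [hDeq]; exact hdev1
  -- first order term vanishes
  have hmeasQ : ∀ x x' y y' : V, Q.part x = Q.part x' → Q.part y = Q.part y' →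
      phi' (stepFn P f x y) = phi' (stepFn P f x' y') := fun x x' y y' hx hy => by
    rw [stepFn_refine_meas P f A B x x' y y' hx hy]
  have hmeasP : ∀ x x' y y' : V, P.part x = P.part x' → P.part y = P.part y' →
      phi' (stepFn P f x y) = phi' (stepFn P f x' y') := fun x x' y y' hx hy => by
    rw [stepFn_meas P f x x' y y' hx hy]
  have hz : ∑ x, ∑ y, phi' (stepFn P f x y) * (stepFn Q f x y - stepFn P f x y) = 0 := by
    have e2 := sum_mul_step Q f (fun x y => phi' (stepFn P f x y)) hmeasQ
    have e3 := sum_mul_step P f (fun x y => phi' (stepFn P f x y)) hmeasP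
    calc ∑ x, ∑ y, phi' (stepFn P f x y) * (stepFn Q f x y - stepFn P f x y)
        = ∑ x, ∑ y, (stepFn Q f x y * phi' (stepFn P f x y)
            - stepFn P f x y * phi' (stepFn P f x y)) :=
          Finset.sum_congr rfl fun x _ => Finset.sum_congr rfl fun y _ => by ring
      _ = (∑ x, ∑ y, stepFn Q f x y * phi' (stepFn P f x y))
            - ∑ x, ∑ y, stepFn P f x y * phi' (stepFn P f x y) := by
          simp only [Finset.sum_sub_distrib]
      _ = 0 := by rw [← e2, ← e3, sub_self]
  -- energy difference equals sum of Bregman divergences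
  have hE : ∑ x, ∑ y, phi (stepFn Q f x y)
      = ∑ x, ∑ y, phi (stepFn P f x y) + ∑ x, ∑ y, psi P Q f x y := by
    have : ∑ x, ∑ y, psi P Q f x y
        = (∑ x, ∑ y, phi (stepFn Q f x y)) - (∑ x, ∑ y, phi (stepFn P f x y))
          - ∑ x, ∑ y, phi' (stepFn P f x y) * (stepFn Q f x y - stepFn P f x y) := by
      unfold psi
      simp only [Finset.sum_sub_distrib]
    rw [hz] at this
    linarith
  -- pointwise facts
  have hpsi0 : ∀ x y, 0 ≤ psi P Q f x y := fun x y =>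
    bregman_nonneg (hg'nn x y) (hgnn x y)
  -- the second-order gain
  suffices hgain : ε ^ 2 * ((Fintype.card V : ℝ)) ^ 2 / 2 ≤ ∑ x, ∑ y, psi P Q f x y by
    rw [hE]; linarith
  by_cases hcase : ε * ((Fintype.card V : ℝ)) ^ 2 / 4 ≤
      ∑ x, ∑ y, ((stepFn Q f x y - stepFn P f x y) * hfun P f A B x y
        - (stepFn Q f x y - stepFn P f x y) * chi P f A B x y)
  · -- large contribution from blocks with big new density
    have hpt : ∀ x y, 2 * ((stepFn Q f x y - stepFn P f x y) * hfun P f A B x y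
        - (stepFn Q f x y - stepFn P f x y) * chi P f A B x y) ≤ psi P Q f x y := by
      intro x y
      by_cases hc : stepFn Q f x y ≤ 3
      · have : chi P f A B x y = hfun P f A B x y := by
          unfold chi; rw [if_pos hc, one_mul]
        rw [this]
        simpa using hpsi0 x y
      · have hch : chi P f A B x y = 0 := by
          unfold chi; rw [if_neg hc, zero_mul]
        rw [hch]
        rcases hfun_cases P f A B x y with ⟨h1, h2⟩ | h1
        · rw [h1]
          have := bregman_large (s := stepFn Q f x y) (t := stepFn P f x y)
            (by linarith) (hgnn x y) h2
          unfold psi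
          linarith
        · rw [h1]
          simpa using hpsi0 x y
    have hsum : 2 * (ε * ((Fintype.card V : ℝ)) ^ 2 / 4) ≤ ∑ x, ∑ y, psi P Q f x y := by
      calc 2 * (ε * ((Fintype.card V : ℝ)) ^ 2 / 4)
          ≤ 2 * ∑ x, ∑ y, ((stepFn Q f x y - stepFn P f x y) * hfun P f A B x y
            - (stepFn Q f x y - stepFn P f x y) * chi P f A B x y) := by linarith
        _ = ∑ x, ∑ y, 2 * ((stepFn Q f x y - stepFn P f x y) * hfun P f A B x y
            - (stepFn Q f x y - stepFn P f x y) * chi P f A B x y) := by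
            rw [Finset.mul_sum]
            exact Finset.sum_congr rfl fun x _ => by rw [Finset.mul_sum]
        _ ≤ ∑ x, ∑ y, psi P Q f x y :=
            Finset.sum_le_sum fun x _ => Finset.sum_le_sum fun y _ => hpt x y
    have hee : ε ^ 2 * ((Fintype.card V : ℝ)) ^ 2 ≤ ε * ((Fintype.card V : ℝ)) ^ 2 := by
      nlinarith [mul_nonneg (mul_nonneg hε0.le (sub_nonneg.2 hε1)) hN2.le]
    linarith
  · -- Cauchy–Schwarz case
    push_neg at hcase
    have hD2nn : 0 ≤ ∑ x, ∑ y, ((stepFn Q f x y - stepFn P f x y) * hfun P f A B x y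
        - (stepFn Q f x y - stepFn P f x y) * chi P f A B x y) := by
      refine Finset.sum_nonneg fun x _ => Finset.sum_nonneg fun y _ => ?_
      by_cases hc : stepFn Q f x y ≤ 3
      · have : chi P f A B x y = hfun P f A B x y := by
          unfold chi; rw [if_pos hc, one_mul]
        rw [this]; simp
      · have hch : chi P f A B x y = 0 := by
          unfold chi; rw [if_neg hc, zero_mul]
        rw [hch]
        rcases hfun_cases P f A B x y with ⟨h1, h2⟩ | h1
        · rw [h1]; nlinarith
        · rw [h1]; simp
    have hsplit : ∑ x, ∑ y, ((stepFn Q f x y - stepFn P f x y) * hfun P f A B x y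
          - (stepFn Q f x y - stepFn P f x y) * chi P f A B x y)
        = (∑ x, ∑ y, (stepFn Q f x y - stepFn P f x y) * hfun P f A B x y)
          - ∑ x, ∑ y, (stepFn Q f x y - stepFn P f x y) * chi P f A B x y := by
      simp only [Finset.sum_sub_distrib]
    -- D1 bound
    have habsD1 : 3 * (ε * ((Fintype.card V : ℝ)) ^ 2) / 4 ≤
        |∑ x, ∑ y, (stepFn Q f x y - stepFn P f x y) * chi P f A B x y| := by
      set D := ∑ x, ∑ y, (stepFn Q f x y - stepFn P f x y) * hfun P f A B x y with hD
      set D1 := ∑ x, ∑ y, (stepFn Q f x y - stepFn P f x y) * chi P f A B x y with hD1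
      have h2 : D - D1 < ε * ((Fintype.card V : ℝ)) ^ 2 / 4 := by
        rw [hsplit] at hcase; exact hcase
      have h3 : 0 ≤ D - D1 := by rw [hsplit] at hD2nn; exact hD2nn
      have h4 : |D| ≤ |D1| + (D - D1) := by
        calc |D| = |D1 + (D - D1)| := by ring_nf
          _ ≤ |D1| + |D - D1| := abs_add_le _ _
          _ = |D1| + (D - D1) := by rw [abs_of_nonneg h3]
      linarith [hdev2]
    -- Cauchy–Schwarz
    have hprod : ∀ T : V → V → ℝ, ∑ x, ∑ y, T x y
        = ∑ z ∈ (univ ×ˢ univ : Finset (V × V)), T z.1 z.2 := fun T =>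
      (Finset.sum_product' (s := univ) (t := univ) (f := T)).symm
    have hCS := Finset.sum_mul_sq_le_sq_mul_sq (univ ×ˢ univ : Finset (V × V))
      (fun z => (stepFn Q f z.1 z.2 - stepFn P f z.1 z.2) * chi P f A B z.1 z.2)
      (fun z => chi P f A B z.1 z.2)
    have hD1eq : ∑ x, ∑ y, (stepFn Q f x y - stepFn P f x y) * chi P f A B x y
        = ∑ z ∈ (univ ×ˢ univ : Finset (V × V)),
            ((stepFn Q f z.1 z.2 - stepFn P f z.1 z.2) * chi P f A B z.1 z.2)
              * chi P f A B z.1 z.2 := by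
      rw [hprod (fun x y => (stepFn Q f x y - stepFn P f x y) * chi P f A B x y)]
      refine Finset.sum_congr rfl fun z _ => ?_
      rcases chi_cases P f A B z.1 z.2 with ⟨h1, -, -⟩ | h1 <;> rw [h1] <;> ring
    have hv2 : ∑ z ∈ (univ ×ˢ univ : Finset (V × V)), chi P f A B z.1 z.2 ^ 2
        ≤ ((Fintype.card V : ℝ)) ^ 2 := by
      calc ∑ z ∈ (univ ×ˢ univ : Finset (V × V)), chi P f A B z.1 z.2 ^ 2
          ≤ ∑ _z ∈ (univ ×ˢ univ : Finset (V × V)), (1:ℝ) := by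
            refine Finset.sum_le_sum fun z _ => ?_
            rcases chi_cases P f A B z.1 z.2 with ⟨h1, -, -⟩ | h1 <;> rw [h1] <;> norm_num
        _ = ((Fintype.card V : ℝ)) ^ 2 := by
            rw [Finset.sum_const, Finset.card_product, card_univ, nsmul_eq_mul]
            push_cast
            ring
    have hu2 : ∑ z ∈ (univ ×ˢ univ : Finset (V × V)),
          ((stepFn Q f z.1 z.2 - stepFn P f z.1 z.2) * chi P f A B z.1 z.2) ^ 2
        ≤ ∑ x, ∑ y, psi P Q f x y := by
      rw [hprod (fun x y => psi P Q f x y)]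
      refine Finset.sum_le_sum fun z _ => ?_
      rcases chi_cases P f A B z.1 z.2 with ⟨h1, h2, h3⟩ | h1
      · rw [h1, mul_one]
        have := bregman_eq (s := stepFn Q f z.1 z.2) (t := stepFn P f z.1 z.2) h3 h2
        unfold psi
        rw [this]
      · rw [h1, mul_zero]
        simpa using hpsi0 z.1 z.2
    -- combine
    set SP := ∑ x, ∑ y, psi P Q f x y with hSP
    have hfin : (3 * (ε * ((Fintype.card V : ℝ)) ^ 2) / 4) ^ 2
        ≤ SP * ((Fintype.card V : ℝ)) ^ 2 := by
      have h5 : (3 * (ε * ((Fintype.card V : ℝ)) ^ 2) / 4) ^ 2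
          ≤ (∑ x, ∑ y, (stepFn Q f x y - stepFn P f x y) * chi P f A B x y) ^ 2 := by
        calc (3 * (ε * ((Fintype.card V : ℝ)) ^ 2) / 4) ^ 2
            ≤ |∑ x, ∑ y, (stepFn Q f x y - stepFn P f x y) * chi P f A B x y| ^ 2 :=
              pow_le_pow_left₀ (by positivity) habsD1 2
          _ = (∑ x, ∑ y, (stepFn Q f x y - stepFn P f x y) * chi P f A B x y) ^ 2 :=
              sq_abs _
      have h6 := hD1eq ▸ h5
      calc (3 * (ε * ((Fintype.card V : ℝ)) ^ 2) / 4) ^ 2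
          ≤ (∑ z ∈ (univ ×ˢ univ : Finset (V × V)),
              ((stepFn Q f z.1 z.2 - stepFn P f z.1 z.2) * chi P f A B z.1 z.2)
                * chi P f A B z.1 z.2) ^ 2 := h6
        _ ≤ (∑ z ∈ (univ ×ˢ univ : Finset (V × V)),
              ((stepFn Q f z.1 z.2 - stepFn P f z.1 z.2) * chi P f A B z.1 z.2) ^ 2)
            * ∑ z ∈ (univ ×ˢ univ : Finset (V × V)), chi P f A B z.1 z.2 ^ 2 := hCS
        _ ≤ SP * ((Fintype.card V : ℝ)) ^ 2 := by
            have hSPnn : 0 ≤ ∑ z ∈ (univ ×ˢ univ : Finset (V × V)),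
                ((stepFn Q f z.1 z.2 - stepFn P f z.1 z.2) * chi P f A B z.1 z.2) ^ 2 :=
              Finset.sum_nonneg fun z _ => sq_nonneg _
            have hSPge : (0:ℝ) ≤ SP :=
              Finset.sum_nonneg fun x _ => Finset.sum_nonneg fun y _ => hpsi0 x y
            exact mul_le_mul hu2 hv2 (Finset.sum_nonneg fun z _ => sq_nonneg _) hSPge
    nlinarith [hN2, sq_nonneg ε, mul_pos hN2 hN2]


lemma phi_sum_le (f : V → V → ℝ) (hnn : ∀ x y, 0 ≤ f x y)
    (P : Finpartition (univ : Finset V)) :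
    ∑ x, ∑ y, phi (stepFn P f x y) ≤ 6 * (∑ x, ∑ y, f x y) := by
  calc ∑ x, ∑ y, phi (stepFn P f x y)
      ≤ ∑ x, ∑ y, 6 * stepFn P f x y :=
        Finset.sum_le_sum fun x _ => Finset.sum_le_sum fun y _ =>
          phi_le (stepFn_nonneg P hnn x y)
    _ = 6 * ∑ x, ∑ y, stepFn P f x y := by
        rw [Finset.mul_sum]
        exact Finset.sum_congr rfl fun x _ => (Finset.mul_sum _ _ _).symm
    _ = 6 * (∑ x, ∑ y, f x y) := by rw [step_sum_eq]

lemma iterate (f : V → V → ℝ) (hnn : ∀ x y, 0 ≤ f x y) {ε : ℝ}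
    (hε0 : 0 < ε) (hε1 : ε ≤ 1) :
    ∀ k : ℕ, ∀ P : Finpartition (univ : Finset V),
      6 * (∑ x, ∑ y, f x y) - (∑ x, ∑ y, phi (stepFn P f x y)) ≤
        k * (ε ^ 2 * ((Fintype.card V : ℝ)) ^ 2 / 2) →
      ∃ Q : Finpartition (univ : Finset V),
        (∀ A B : Finset V, |∑ x ∈ A, ∑ y ∈ B, (f x y - stepFn Q f x y) *
          (if stepFn Q f x y ≤ 1 then 1 else 0)| ≤ ε * ((Fintype.card V : ℝ)) ^ 2) ∧
        Q.parts.card ≤ 4 ^ k * P.parts.card := by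
  have hN2 : (0:ℝ) < ((Fintype.card V : ℝ)) ^ 2 := by
    have : (0:ℝ) < (Fintype.card V : ℝ) := by exact_mod_cast Fintype.card_pos
    positivity
  intro k
  induction k with
  | zero =>
    intro P hP
    norm_num at hP
    by_cases hgood : ∀ A B : Finset V, |∑ x ∈ A, ∑ y ∈ B, (f x y - stepFn P f x y) *
        (if stepFn P f x y ≤ 1 then 1 else 0)| ≤ ε * ((Fintype.card V : ℝ)) ^ 2
    · exact ⟨P, hgood, by simpa using le_refl P.parts.card⟩
    · exfalso
      push_neg at hgood
      obtain ⟨A, B, hAB⟩ := hgood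
      have hinc := increment f hnn hε0 hε1 P A B hAB
      have hmax := phi_sum_le f hnn (refine P A B)
      have : (0:ℝ) < ε ^ 2 * ((Fintype.card V : ℝ)) ^ 2 / 2 := by positivity
      linarith
  | succ k ih =>
    intro P hP
    by_cases hgood : ∀ A B : Finset V, |∑ x ∈ A, ∑ y ∈ B, (f x y - stepFn P f x y) *
        (if stepFn P f x y ≤ 1 then 1 else 0)| ≤ ε * ((Fintype.card V : ℝ)) ^ 2
    · exact ⟨P, hgood, Nat.le_mul_of_pos_left _ (by positivity)⟩
    · push_neg at hgood
      obtain ⟨A, B, hAB⟩ := hgood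
      have hinc := increment f hnn hε0 hε1 P A B hAB
      have hnext : 6 * (∑ x, ∑ y, f x y) -
          (∑ x, ∑ y, phi (stepFn (refine P A B) f x y)) ≤
          k * (ε ^ 2 * ((Fintype.card V : ℝ)) ^ 2 / 2) := by
        push_cast at hP
        linarith
      obtain ⟨Q, hQ1, hQ2⟩ := ih (refine P A B) hnext
      refine ⟨Q, hQ1, ?_⟩
      calc Q.parts.card ≤ 4 ^ k * (refine P A B).parts.card := hQ2
        _ ≤ 4 ^ k * (4 * P.parts.card) :=
            Nat.mul_le_mul_left _ (card_refine_le P A B)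
        _ = 4 ^ (k + 1) * P.parts.card := by ring

end SWR

open SWR in
lemma cutNorm_le_of_bound {V : Type*} [DecidableEq V] [Fintype V] [Nonempty V]
    {g : V → V → ℝ} {ε : ℝ} (hε : 0 ≤ ε)
    (h : ∀ A B : Finset V, |∑ x ∈ A, ∑ y ∈ B, g x y| ≤ ε * ((Fintype.card V : ℝ)) ^ 2) :
    cutNorm g ≤ ε := by
  have hN2 : (0:ℝ) < ((Fintype.card V : ℝ)) ^ 2 := by
    have : (0:ℝ) < (Fintype.card V : ℝ) := by exact_mod_cast Fintype.card_pos
    positivity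
  apply ciSup_le
  intro p
  rw [abs_div, abs_of_nonneg hN2.le, div_le_iff₀ hN2]
  exact h p.1 p.2

/-- **Sparse weak regularity lemma.** For every `ε > 0` and every symmetric nonnegative
`f : V × V → [0,∞)` there exists a partition `𝒫` of `V` into at most `2^{32·E[f]/ε²}` parts
with `‖(f − f_𝒫)·1_{f_𝒫 ≤ 1}‖_□ ≤ ε`. -/
theorem sparse_weak_regularity {V : Type*} [DecidableEq V] [Fintype V] [Nonempty V]
    (ε : ℝ) (hε : 0 < ε) (f : V → V → ℝ)
    (hsymm : ∀ x y, f x y = f y x) (hnn : ∀ x y, 0 ≤ f x y) :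
    ∃ P : Finpartition (Finset.univ : Finset V),
      (P.parts.card : ℝ) ≤
        2 ^ (32 * ((∑ x, ∑ y, f x y) / ((Fintype.card V : ℝ)) ^ 2) / ε ^ 2) ∧
      cutNorm (fun x y =>
        (f x y - stepFn P f x y) * (if stepFn P f x y ≤ 1 then 1 else 0)) ≤ ε := by
  classical
  open SWR in
  have hN : (0:ℝ) < (Fintype.card V : ℝ) := by exact_mod_cast Fintype.card_pos
  have hN2 : (0:ℝ) < ((Fintype.card V : ℝ)) ^ 2 := by positivity
  have hS0 : 0 ≤ ∑ x, ∑ y, f x y :=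
    Finset.sum_nonneg fun x _ => Finset.sum_nonneg fun y _ => hnn x y
  set d := (∑ x, ∑ y, f x y) / ((Fintype.card V : ℝ)) ^ 2 with hd
  have hd0 : 0 ≤ d := by positivity
  have hSd : ∑ x, ∑ y, f x y = d * ((Fintype.card V : ℝ)) ^ 2 := by
    rw [hd]; field_simp
  have hone : (1:ℝ) ≤ 2 ^ (32 * d / ε ^ 2) := by
    have h0 : (0:ℝ) ≤ 32 * d / ε ^ 2 := by positivity
    calc (1:ℝ) = (2:ℝ) ^ (0:ℝ) := (Real.rpow_zero 2).symm
      _ ≤ 2 ^ (32 * d / ε ^ 2) :=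
        Real.rpow_le_rpow_of_exponent_le (by norm_num) h0
  have huniv : (univ : Finset V) ≠ ⊥ := by
    simpa using (Finset.univ_nonempty (α := V)).ne_empty
  set P0 : Finpartition (univ : Finset V) := Finpartition.indiscrete huniv with hP0
  have hP0parts : P0.parts = {univ} := by
    rw [hP0, Finpartition.indiscrete_parts]
  have hP0card : P0.parts.card = 1 := by rw [hP0parts]; rfl
  have hpart0 : ∀ x : V, P0.part x = univ := fun x =>
    P0.part_eq_of_mem (by rw [hP0parts]; exact Finset.mem_singleton_self _) (mem_univ x)
  have hstep0 : ∀ x y : V, stepFn P0 f x y = d := by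
    intro x y
    unfold stepFn
    rw [hpart0 x, hpart0 y, card_univ, hd, sq]
  rcases le_or_gt d 1 with hd1 | hd1
  · rcases le_or_gt d ε with hde | hde
    · -- trivial partition suffices
      refine ⟨P0, by rw [hP0card]; exact_mod_cast hone, ?_⟩
      apply cutNorm_le_of_bound hε.le
      intro A B
      have hre : ∑ x ∈ A, ∑ y ∈ B,
          (f x y - stepFn P0 f x y) * (if stepFn P0 f x y ≤ 1 then 1 else 0)
          = ∑ x ∈ A, ∑ y ∈ B, (f x y - d) :=
        Finset.sum_congr rfl fun x _ => Finset.sum_congr rfl fun y _ => by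
          rw [hstep0 x y, if_pos hd1, mul_one]
      rw [hre, abs_le]
      have hAc : ((A.card : ℝ)) ≤ (Fintype.card V : ℝ) := by
        exact_mod_cast Finset.card_le_univ A
      have hBc : ((B.card : ℝ)) ≤ (Fintype.card V : ℝ) := by
        exact_mod_cast Finset.card_le_univ B
      have hAc0 : (0:ℝ) ≤ (A.card : ℝ) := Nat.cast_nonneg _
      have hBc0 : (0:ℝ) ≤ (B.card : ℝ) := Nat.cast_nonneg _
      constructor
      · have h1 : ∑ x ∈ A, ∑ y ∈ B, (-d : ℝ) ≤ ∑ x ∈ A, ∑ y ∈ B, (f x y - d) :=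
          Finset.sum_le_sum fun x _ => Finset.sum_le_sum fun y _ => by
            linarith [hnn x y]
        have h2 : ∑ x ∈ A, ∑ y ∈ B, (-d : ℝ) = -(d * ((A.card : ℝ) * (B.card : ℝ))) := by
          rw [Finset.sum_const, Finset.sum_const, nsmul_eq_mul, nsmul_eq_mul]
          ring
        have h3 : d * ((A.card : ℝ) * (B.card : ℝ)) ≤ ε * ((Fintype.card V : ℝ)) ^ 2 := by
          have : (A.card : ℝ) * (B.card : ℝ) ≤ ((Fintype.card V : ℝ)) ^ 2 := by
            rw [sq]; exact mul_le_mul hAc hBc hBc0 hN.le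
          nlinarith
        linarith
      · have h1 : ∑ x ∈ A, ∑ y ∈ B, (f x y - d) ≤ ∑ x ∈ A, ∑ y ∈ B, f x y :=
          Finset.sum_le_sum fun x _ => Finset.sum_le_sum fun y _ => by linarith
        have h2 : ∑ x ∈ A, ∑ y ∈ B, f x y ≤ ∑ x, ∑ y, f x y := by
          calc ∑ x ∈ A, ∑ y ∈ B, f x y
              ≤ ∑ x ∈ A, ∑ y, f x y :=
                Finset.sum_le_sum fun x _ =>
                  Finset.sum_le_sum_of_subset_of_nonneg (Finset.subset_univ B)
                    (fun y _ _ => hnn x y)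
            _ ≤ ∑ x, ∑ y, f x y :=
                Finset.sum_le_sum_of_subset_of_nonneg (Finset.subset_univ A)
                  (fun x _ _ => Finset.sum_nonneg fun y _ => hnn x y)
        have h3 : d * ((Fintype.card V : ℝ)) ^ 2 ≤ ε * ((Fintype.card V : ℝ)) ^ 2 :=
          mul_le_mul_of_nonneg_right hde hN2.le
        linarith [hSd]
    · -- main case : iterate
      have hε1 : ε ≤ 1 := le_of_lt (lt_of_lt_of_le hde hd1)
      set k := ⌈12 * d / ε ^ 2⌉₊ with hk
      have hε2 : (0:ℝ) < ε ^ 2 := by positivity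
      have hkge : 12 * d / ε ^ 2 ≤ (k : ℝ) := Nat.le_ceil _
      have hstart : 6 * (∑ x, ∑ y, f x y) - (∑ x, ∑ y, phi (stepFn P0 f x y)) ≤
          k * (ε ^ 2 * ((Fintype.card V : ℝ)) ^ 2 / 2) := by
        have hphinn : 0 ≤ ∑ x, ∑ y, phi (stepFn P0 f x y) :=
          Finset.sum_nonneg fun x _ => Finset.sum_nonneg fun y _ =>
            phi_nonneg (stepFn_nonneg P0 hnn x y)
        have hmm := mul_le_mul_of_nonneg_right hkge
          (by positivity : (0:ℝ) ≤ ε ^ 2 * ((Fintype.card V : ℝ)) ^ 2 / 2)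
        have heq : (12 * d / ε ^ 2) * (ε ^ 2 * ((Fintype.card V : ℝ)) ^ 2 / 2)
            = 6 * (d * ((Fintype.card V : ℝ)) ^ 2) := by
          field_simp
          ring
        rw [heq] at hmm
        rw [hSd]
        linarith
      obtain ⟨Q, hQgood, hQcard⟩ := iterate f hnn hε hε1 k P0 hstart
      refine ⟨Q, ?_, cutNorm_le_of_bound hε.le hQgood⟩
      have h1 : (Q.parts.card : ℝ) ≤ (4:ℝ) ^ k := by
        rw [hP0card, mul_one] at hQcard
        exact_mod_cast hQcard
      have h2 : ((4:ℝ)) ^ k = (2:ℝ) ^ (((2 * k : ℕ)) : ℝ) := by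
        rw [Real.rpow_natCast, pow_mul]
        norm_num
      have h3 : (((2 * k : ℕ)) : ℝ) ≤ 32 * d / ε ^ 2 := by
        push_cast
        have hkle : (k : ℝ) < 12 * d / ε ^ 2 + 1 := Nat.ceil_lt_add_one (by positivity)
        have hke2 : (k : ℝ) * ε ^ 2 < 12 * d + ε ^ 2 := by
          have := mul_lt_mul_of_pos_right hkle hε2
          rw [add_mul, div_mul_cancel₀ _ hε2.ne', one_mul] at this
          exact this
        have hε2d : ε ^ 2 ≤ 4 * d := by nlinarith
        rw [le_div_iff₀ hε2]
        nlinarith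
      calc (Q.parts.card : ℝ) ≤ (4:ℝ) ^ k := h1
        _ = (2:ℝ) ^ (((2 * k : ℕ)) : ℝ) := h2
        _ ≤ 2 ^ (32 * d / ε ^ 2) :=
            Real.rpow_le_rpow_of_exponent_le (by norm_num) h3
  · -- dense case : the indicator vanishes identically
    refine ⟨P0, by rw [hP0card]; exact_mod_cast hone, ?_⟩
    apply cutNorm_le_of_bound hε.le
    intro A B
    have hre : ∑ x ∈ A, ∑ y ∈ B,
        (f x y - stepFn P0 f x y) * (if stepFn P0 f x y ≤ 1 then 1 else 0)
        = ∑ x ∈ A, ∑ y ∈ B, (0:ℝ) :=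
      Finset.sum_congr rfl fun x _ => Finset.sum_congr rfl fun y _ => by
        rw [hstep0 x y, if_neg (by linarith), mul_zero]
    rw [hre]
    simp only [Finset.sum_const_zero, abs_zero]
    positivity
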